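/- Let M be a metric space equipped with its Borel σ-algebra, let P and P_n (n ∈ ℕ) be probability measures on M with P_n ⇒ P (weak convergence), and let S and S_n (n ∈ ℕ) be Borel subsets of M. Assume P(∂S) = 0 (where ∂S is the topological boundary of S), P(S) = p* > 0, and P_n(S △ S_n) → 0 as n → ∞, where △ denotes the symmetric set difference. Then the conditional distributions converge weakly: for X_n ~ P_n and X ~ P, the law of X_n given X_n ∈ S_n converges weakly to the law of X given X ∈ S; equivalently, the normalized restricted measures A ↦ P_n(A ∩ S_n)/P_n(S_n) converge weakly to A ↦ P(A ∩ S)/P(S). -/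

import Mathlib

open MeasureTheory ProbabilityTheory Filter

lemma integral_cond_eq {M : Type*} [MeasurableSpace M] (μ : Measure M) (s : Set M)
    (f : M → ℝ) :
    ∫ x, f x ∂(μ[|s]) = (μ s).toReal⁻¹ * ∫ x in s, f x ∂μ := by
  rw [ProbabilityTheory.cond, integral_smul_measure, ENNReal.toReal_inv, smul_eq_mul]

/-- **Convergence of conditional probability measures (Lemma A.4).** Let `P` and
`Pₙ` be probability measures on a metric space `M` with `Pₙ ⇒ P` (weakly, i.e.
integrals of bounded continuous functions converge), and let `S`, `Sₙ` be Borel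
sets with `P(∂S) = 0`, `P(S) = p* > 0` and `Pₙ(S △ Sₙ) → 0`. Then the
conditional measures `Pₙ(· ∩ Sₙ)/Pₙ(Sₙ)` converge weakly to `P(· ∩ S)/P(S)`. -/
theorem conditional_weak_convergence
    {M : Type*} [MetricSpace M] [MeasurableSpace M] [BorelSpace M]
    (P : Measure M) [IsProbabilityMeasure P]
    (Pn : ℕ → Measure M) (hPn : ∀ n, IsProbabilityMeasure (Pn n))
    (hconv : ∀ f : BoundedContinuousFunction M ℝ,
      Tendsto (fun n => ∫ x, f x ∂(Pn n)) atTop (nhds (∫ x, f x ∂P)))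
    (S : Set M) (Sn : ℕ → Set M)
    (hS : MeasurableSet S) (hSn : ∀ n, MeasurableSet (Sn n))
    (hfrontier : P (frontier S) = 0)
    (hpos : P S ≠ 0)
    (hsymmdiff : Tendsto (fun n => Pn n (symmDiff S (Sn n))) atTop (nhds 0)) :
    ∀ f : BoundedContinuousFunction M ℝ,
      Tendsto (fun n => ∫ x, f x ∂((Pn n)[|Sn n])) atTop (nhds (∫ x, f x ∂(P[|S]))) := by
  classical
  haveI := hPn
  intro f
  -- weak convergence in the ProbabilityMeasure topology
  set μ : ProbabilityMeasure M := ⟨P, inferInstance⟩ with hμ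
  set μs : ℕ → ProbabilityMeasure M := fun n => ⟨Pn n, hPn n⟩ with hμs
  have hws : Tendsto μs atTop (nhds μ) :=
    ProbabilityMeasure.tendsto_iff_forall_integral_tendsto.mpr hconv
  have h_opens : ∀ G, IsOpen G → P G ≤ atTop.liminf (fun n => Pn n G) :=
    fun G hG => ProbabilityMeasure.le_liminf_measure_open_of_tendsto hws hG
  -- convergence of the measures of S
  have hSconv : Tendsto (fun n => Pn n S) atTop (nhds (P S)) :=
    tendsto_measure_of_null_frontier h_opens hfrontier
  have hne : ∀ᶠ n in atTop, Pn n S ≠ 0 := hSconv.eventually_ne hpos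
  -- real-valued versions
  set p : ℝ := (P S).toReal with hp
  have hp0 : p ≠ 0 := by
    simp only [hp, ne_eq, ENNReal.toReal_eq_zero_iff]
    push_neg
    exact ⟨hpos, measure_ne_top _ _⟩
  have han : Tendsto (fun n => (Pn n S).toReal) atTop (nhds p) :=
    (ENNReal.tendsto_toReal (measure_ne_top P S)).comp hSconv
  have hcn : Tendsto (fun n => (Pn n (symmDiff S (Sn n))).toReal) atTop (nhds 0) := by
    have := (ENNReal.tendsto_toReal (by simp : (0:ENNReal) ≠ ⊤)).comp hsymmdiff
    simpa [Function.comp_def] using this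
  -- the auxiliary conditional-on-S probability measures
  haveI hPScond : IsProbabilityMeasure (P[|S]) := cond_isProbabilityMeasure hpos
  set ν : ℕ → Measure M := fun n => if Pn n S = 0 then P[|S] else (Pn n)[|S] with hν
  haveI hνprob : ∀ n, IsProbabilityMeasure (ν n) := by
    intro n
    by_cases h : Pn n S = 0
    · simp only [hν, if_pos h]; infer_instance
    · simp only [hν, if_neg h]; exact cond_isProbabilityMeasure h
  -- portmanteau open-set condition for ν
  have h_opens' : ∀ G, IsOpen G → (P[|S]) G ≤ atTop.liminf (fun n => ν n G) := by
    intro G hG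
    have hev : ∀ᶠ n in atTop, ν n G = (Pn n S)⁻¹ * Pn n (S ∩ G) := by
      filter_upwards [hne] with n hn
      simp only [hν, if_neg hn]
      exact cond_apply hS (Pn n) G
    rw [liminf_congr hev, cond_apply hS]
    have h2 : P (S ∩ G) ≤ atTop.liminf (fun n => Pn n (S ∩ G)) := by
      have hsub : S ∩ G ⊆ (G ∩ interior S) ∪ frontier S := by
        intro x ⟨hxS, hxG⟩
        by_cases h : x ∈ interior S
        · exact Or.inl ⟨hxG, h⟩
        · exact Or.inr ⟨subset_closure hxS, h⟩
      have h3 : P (S ∩ G) ≤ P (G ∩ interior S) := by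
        calc P (S ∩ G) ≤ P ((G ∩ interior S) ∪ frontier S) := measure_mono hsub
        _ ≤ P (G ∩ interior S) + P (frontier S) := measure_union_le _ _
        _ = P (G ∩ interior S) := by rw [hfrontier, add_zero]
      refine h3.trans ((h_opens _ (hG.inter isOpen_interior)).trans ?_)
      refine liminf_le_liminf (Eventually.of_forall fun n => measure_mono ?_)
      exact fun x ⟨hxG, hxI⟩ => ⟨interior_subset hxI, hxG⟩
    have h1 : atTop.liminf (fun n => (Pn n S)⁻¹) = (P S)⁻¹ :=
      (hSconv.inv).liminf_eq
    calc (P S)⁻¹ * P (S ∩ G)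
        ≤ atTop.liminf (fun n => (Pn n S)⁻¹) * atTop.liminf (fun n => Pn n (S ∩ G)) := by
          rw [h1]; exact mul_le_mul_right h2 _
      _ ≤ atTop.liminf (fun n => (Pn n S)⁻¹ * Pn n (S ∩ G)) := ENNReal.le_liminf_mul
  -- weak convergence of ν to P[|S]
  have hνconv : Tendsto (fun n => ∫ x, f x ∂(ν n)) atTop (nhds (∫ x, f x ∂(P[|S]))) := by
    apply BoundedContinuousFunction.tendsto_integral_of_forall_integral_le_liminf_integral
    intro g hg
    exact integral_le_liminf_integral_of_forall_isOpen_measure_le_liminf_measure hg h_opens'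
  set T : ℝ := ∫ x, f x ∂(P[|S]) with hT
  -- conditional-on-S integrals converge
  have hJcond : Tendsto (fun n => ∫ x, f x ∂((Pn n)[|S])) atTop (nhds T) := by
    refine hνconv.congr' ?_
    filter_upwards [hne] with n hn
    simp only [hν, if_neg hn]
  -- hence the set integrals over S converge to p * T
  have hJ : Tendsto (fun n => ∫ x in S, f x ∂(Pn n)) atTop (nhds (p * T)) := by
    have := han.mul hJcond
    refine this.congr' ?_
    filter_upwards [hne] with n hn
    rw [integral_cond_eq]
    rw [← mul_assoc, mul_inv_cancel₀, one_mul]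
    simp only [ne_eq, ENNReal.toReal_eq_zero_iff]
    push_neg
    exact ⟨hn, measure_ne_top _ _⟩
  -- symmetric difference estimates
  have hsub1 : ∀ n, Sn n \ S ⊆ symmDiff S (Sn n) := fun n => by
    rw [Set.symmDiff_def]; exact Set.subset_union_right
  have hsub2 : ∀ n, S \ Sn n ⊆ symmDiff S (Sn n) := fun n => by
    rw [Set.symmDiff_def]; exact Set.subset_union_left
  -- integrals over Sn converge to p * T
  have hI : Tendsto (fun n => ∫ x in Sn n, f x ∂(Pn n)) atTop (nhds (p * T)) := by
    have hdiff : Tendsto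
        (fun n => (∫ x in Sn n, f x ∂(Pn n)) - ∫ x in S, f x ∂(Pn n)) atTop (nhds 0) := by
      apply squeeze_zero_norm (a := fun n => ‖f‖ * (2 * (Pn n (symmDiff S (Sn n))).toReal))
      · intro n
        have hint : ∀ s : Set M, IntegrableOn (fun x => f x) s (Pn n) :=
          fun s => (f.integrable (Pn n)).integrableOn
        have e1 : (∫ x in Sn n ∩ S, f x ∂(Pn n)) + (∫ x in Sn n \ S, f x ∂(Pn n))
            = ∫ x in Sn n, f x ∂(Pn n) := integral_inter_add_diff hS (hint _)
        have e2 : (∫ x in S ∩ Sn n, f x ∂(Pn n)) + (∫ x in S \ Sn n, f x ∂(Pn n))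
            = ∫ x in S, f x ∂(Pn n) := integral_inter_add_diff (hSn n) (hint _)
        have ecomm : Sn n ∩ S = S ∩ Sn n := Set.inter_comm _ _
        have key : (∫ x in Sn n, f x ∂(Pn n)) - ∫ x in S, f x ∂(Pn n)
            = (∫ x in Sn n \ S, f x ∂(Pn n)) - ∫ x in S \ Sn n, f x ∂(Pn n) := by
          rw [← e1, ← e2, ecomm]; ring
        rw [key]
        have b1 : ‖∫ x in Sn n \ S, f x ∂(Pn n)‖ ≤ ‖f‖ * (Pn n (symmDiff S (Sn n))).toReal := by
          refine (norm_setIntegral_le_of_norm_le_const_ae (measure_lt_top _ _)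
            (Eventually.of_forall fun x => f.norm_coe_le_norm x)).trans ?_
          exact mul_le_mul_of_nonneg_left
            (ENNReal.toReal_mono (measure_ne_top _ _) (measure_mono (hsub1 n))) (norm_nonneg _)
        have b2 : ‖∫ x in S \ Sn n, f x ∂(Pn n)‖ ≤ ‖f‖ * (Pn n (symmDiff S (Sn n))).toReal := by
          refine (norm_setIntegral_le_of_norm_le_const_ae (measure_lt_top _ _)
            (Eventually.of_forall fun x => f.norm_coe_le_norm x)).trans ?_
          exact mul_le_mul_of_nonneg_left
            (ENNReal.toReal_mono (measure_ne_top _ _) (measure_mono (hsub2 n))) (norm_nonneg _)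
        calc ‖(∫ x in Sn n \ S, f x ∂(Pn n)) - ∫ x in S \ Sn n, f x ∂(Pn n)‖
            ≤ ‖∫ x in Sn n \ S, f x ∂(Pn n)‖ + ‖∫ x in S \ Sn n, f x ∂(Pn n)‖ :=
              norm_sub_le _ _
          _ ≤ ‖f‖ * (Pn n (symmDiff S (Sn n))).toReal
              + ‖f‖ * (Pn n (symmDiff S (Sn n))).toReal := add_le_add b1 b2
          _ = ‖f‖ * (2 * (Pn n (symmDiff S (Sn n))).toReal) := by ring
      · have := (tendsto_const_nhds (x := ‖f‖) (f := atTop)).mul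
          ((tendsto_const_nhds (x := (2:ℝ))).mul hcn)
        simpa using this
    have := hJ.add hdiff
    simpa using this.congr (fun n => by ring)
  -- convergence of Pn n (Sn n) to P S (real-valued)
  have hbn : Tendsto (fun n => (Pn n (Sn n)).toReal) atTop (nhds p) := by
    have hub : ∀ n, (Pn n (Sn n)).toReal
        ≤ (Pn n S).toReal + (Pn n (symmDiff S (Sn n))).toReal := by
      intro n
      rw [← ENNReal.toReal_add (measure_ne_top _ _) (measure_ne_top _ _)]
      refine ENNReal.toReal_mono (by finiteness) ?_
      refine (measure_mono (fun x hx => ?_)).trans (measure_union_le _ _)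
      by_cases h : x ∈ S
      · exact Or.inl h
      · exact Or.inr (hsub1 n ⟨hx, h⟩)
    have hlb : ∀ n, (Pn n S).toReal - (Pn n (symmDiff S (Sn n))).toReal
        ≤ (Pn n (Sn n)).toReal := by
      intro n
      rw [sub_le_iff_le_add, ← ENNReal.toReal_add (measure_ne_top _ _) (measure_ne_top _ _)]
      refine ENNReal.toReal_mono (by finiteness) ?_
      refine (measure_mono (fun x hx => ?_)).trans (measure_union_le _ _)
      by_cases h : x ∈ Sn n
      · exact Or.inl h
      · exact Or.inr (hsub2 n ⟨hx, h⟩)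
    have hlow : Tendsto (fun n => (Pn n S).toReal - (Pn n (symmDiff S (Sn n))).toReal)
        atTop (nhds p) := by simpa using han.sub hcn
    have hup : Tendsto (fun n => (Pn n S).toReal + (Pn n (symmDiff S (Sn n))).toReal)
        atTop (nhds p) := by simpa using han.add hcn
    exact tendsto_of_tendsto_of_tendsto_of_le_of_le hlow hup hlb hub
  -- put everything together
  have hfinal : Tendsto (fun n => (Pn n (Sn n)).toReal⁻¹ * ∫ x in Sn n, f x ∂(Pn n))
      atTop (nhds T) := by
    have := (hbn.inv₀ hp0).mul hI
    rwa [inv_mul_cancel_left₀ hp0] at this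
  refine hfinal.congr fun n => ?_
  rw [integral_cond_eq]
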